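/- Complementary slackness for intensities in the PT model: if (π, Q, P) is PT-dual-feasible, (v, u) is PT-primal-feasible with goal price τ, and τ·(∑_{i∈I} Q i + ∑_{r∈R} P r) = ∑_{i∈I} v i · X i o − ∑_{r∈R} u r · Y r o, then for every j ∈ J one has (∑_{i∈I} v i · X i j − ∑_{r∈R} u r · Y r j) · π j = 0. -/
import Mathlib


open Finset

/-- A triple `(π, Q, P)` is PT-dual-feasible. -/
def PTDualFeasible {I R J : Type*} [Fintype I] [Fintype R] [Fintype J]
    (X : I → J → ℝ) (Y : R → J → ℝ) (o : J)
    (π : J → ℝ) (Q : I → ℝ) (P : R → ℝ) : Prop :=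
  (∀ j, 0 ≤ π j) ∧ (∀ i, 0 ≤ Q i) ∧ (∀ r, 0 ≤ P r) ∧
  (∀ i, (∑ j, X i j * π j) + Q i * X i o = X i o) ∧
  (∀ r, -(∑ j, Y r j * π j) + P r * Y r o = -(Y r o))

/-- A pair `(v, u)` is PT-primal-feasible with goal price `τ`. -/
def PTPrimalFeasible {I R J : Type*} [Fintype I] [Fintype R] [Fintype J]
    (X : I → J → ℝ) (Y : R → J → ℝ) (o : J) (τ : ℝ)
    (v : I → ℝ) (u : R → ℝ) : Prop :=
  (∀ j, 0 ≤ (∑ i, v i * X i j) - ∑ r, u r * Y r j) ∧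
  (∀ i, τ ≤ X i o * v i) ∧ (∀ r, τ ≤ Y r o * u r)

/-- Complementary slackness for intensities in the PT model. -/
theorem pt_complementary_slackness_intensities
    {I R J : Type*} [Fintype I] [Fintype R] [Fintype J]
    [Nonempty I] [Nonempty R] [Nonempty J]
    (X : I → J → ℝ) (Y : R → J → ℝ)
    (hX : ∀ i j, 0 < X i j) (hY : ∀ r j, 0 < Y r j)
    (o : J) (τ : ℝ) (hτ : 0 < τ)
    (π : J → ℝ) (Q : I → ℝ) (P : R → ℝ)
    (hdual : PTDualFeasible X Y o π Q P)
    (v : I → ℝ) (u : R → ℝ)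
    (hprimal : PTPrimalFeasible X Y o τ v u)
    (heq : τ * ((∑ i, Q i) + ∑ r, P r)
      = (∑ i, v i * X i o) - ∑ r, u r * Y r o) :
    ∀ j, ((∑ i, v i * X i j) - ∑ r, u r * Y r j) * π j = 0 := by
  obtain ⟨hπ, hQ, hP, hdX, hdY⟩ := hdual
  obtain ⟨hp0, hpv, hpu⟩ := hprimal
  -- The sum over j of the nonnegative terms equals
  -- τ(∑Q+∑P) - ∑ v_i X_io Q_i - ∑ u_r Y_ro P_r ≤ 0.
  have hsum : ∑ j, ((∑ i, v i * X i j) - ∑ r, u r * Y r j) * π j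
      = ((∑ i, v i * X i o) - ∑ r, u r * Y r o)
        - (∑ i, (X i o * v i) * Q i) - ∑ r, (Y r o * u r) * P r := by
    have h1 : ∑ j, ((∑ i, v i * X i j) - ∑ r, u r * Y r j) * π j
        = (∑ i, v i * ∑ j, X i j * π j) - ∑ r, u r * ∑ j, Y r j * π j := by
      simp_rw [sub_mul, Finset.sum_mul, mul_assoc, Finset.sum_sub_distrib]
      rw [Finset.sum_comm, Finset.sum_comm (f := fun j r => u r * (Y r j * π j))]
      simp_rw [← Finset.mul_sum]
    rw [h1]
    have h2 : ∀ i, ∑ j, X i j * π j = X i o - Q i * X i o := by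
      intro i; linarith [hdX i]
    have h3 : ∀ r, ∑ j, Y r j * π j = Y r o + P r * Y r o := by
      intro r; linarith [hdY r]
    simp_rw [h2, h3, mul_add, mul_sub]
    rw [Finset.sum_add_distrib, Finset.sum_sub_distrib,
      show (∑ i, (X i o * v i) * Q i) = ∑ i, v i * (Q i * X i o) from
        Finset.sum_congr rfl fun i _ => by ring,
      show (∑ r, (Y r o * u r) * P r) = ∑ r, u r * (P r * Y r o) from
        Finset.sum_congr rfl fun r _ => by ring]
    ring_nf
  have hQle : τ * ∑ i, Q i ≤ ∑ i, (X i o * v i) * Q i := by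
    rw [Finset.mul_sum]
    exact Finset.sum_le_sum fun i _ => mul_le_mul_of_nonneg_right (hpv i) (hQ i)
  have hPle : τ * ∑ r, P r ≤ ∑ r, (Y r o * u r) * P r := by
    rw [Finset.mul_sum]
    exact Finset.sum_le_sum fun r _ => mul_le_mul_of_nonneg_right (hpu r) (hP r)
  have hle0 : ∑ j, ((∑ i, v i * X i j) - ∑ r, u r * Y r j) * π j ≤ 0 := by
    rw [hsum]; nlinarith [hQle, hPle]
  have hnn : ∀ j ∈ Finset.univ, 0 ≤ ((∑ i, v i * X i j) - ∑ r, u r * Y r j) * π j :=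
    fun j _ => mul_nonneg (hp0 j) (hπ j)
  have hzero : ∑ j, ((∑ i, v i * X i j) - ∑ r, u r * Y r j) * π j = 0 :=
    le_antisymm hle0 (Finset.sum_nonneg hnn)
  intro j
  exact (Finset.sum_eq_zero_iff_of_nonneg hnn).mp hzero j (Finset.mem_univ j)
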